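/- Let I_1, …, I_μ be subsets of {1, …, n}, each of cardinality k, and for j = 1, …, μ define the relative rank r_j = k − |I_j ∩ (I_1 ∪ ⋯ ∪ I_{j−1})| (with r_1 = k). Let c ∈ F_q^n be a vector such that for every j ∈ {1, …, μ} the number of nonzero coordinates of c inside I_j is at least w+1. Then the Hamming weight of c satisfies wgt(c) ≥ Σ_{j=1}^μ max(0, (w+1) − (k − r_j)). -/

import Mathlib

/-- **Lower bound on the weight from information sets.**
Let `I_1, …, I_μ ⊆ {1,…,n}` each have cardinality `k`, and let
`r_j = k − |I_j ∩ (I_1 ∪ ⋯ ∪ I_{j−1})|` be the relative ranks.  If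
`c ∈ F_q^n` has at least `w+1` nonzero coordinates inside each `I_j`, then
`wgt(c) ≥ Σ_{j=1}^μ max(0, (w+1) − (k − r_j))`. -/
theorem weight_lower_bound_information_sets
    {F : Type*} [Field F] [Fintype F] [DecidableEq F]
    (n k μ w : ℕ)
    (I : Fin μ → Finset (Fin n))
    (hcard : ∀ j, (I j).card = k)
    (r : Fin μ → ℕ)
    (hr : ∀ j, r j = k - ((I j) ∩ ((Finset.univ.filter (fun l => l < j)).biUnion I)).card)
    (c : Fin n → F)
    (hc : ∀ j, w + 1 ≤ ((I j).filter (fun i => c i ≠ 0)).card) :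
    (∑ j, max 0 ((w : ℤ) + 1 - ((k : ℤ) - (r j : ℤ)))) ≤ (hammingNorm c : ℤ) := by
  classical
  set P : Fin μ → Finset (Fin n) :=
    fun j => (Finset.univ.filter (fun l => l < j)).biUnion I with hP
  set S : Fin μ → Finset (Fin n) :=
    fun j => ((I j) \ P j).filter (fun i => c i ≠ 0) with hS
  have hm : ∀ j, ((I j) ∩ P j).card ≤ k := by
    intro j
    rw [← hcard j]
    exact Finset.card_le_card (Finset.inter_subset_left)
  -- per-term bound
  have hterm : ∀ j, max 0 ((w : ℤ) + 1 - ((k : ℤ) - (r j : ℤ))) ≤ ((S j).card : ℤ) := by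
    intro j
    have hkr : (k : ℤ) - (r j : ℤ) = ((I j ∩ P j).card : ℤ) := by
      rw [hr j]
      have : ((I j) ∩ ((Finset.univ.filter (fun l => l < j)).biUnion I)).card ≤ k := hm j
      push_cast [Nat.cast_sub this]
      ring
    rw [hkr]
    apply max_le
    · exact_mod_cast Nat.zero_le _
    · -- w+1 - m ≤ card S j
      have hsub : (I j).filter (fun i => c i ≠ 0) ⊆ S j ∪ (I j ∩ P j) := by
        intro i hi
        simp only [Finset.mem_filter] at hi
        by_cases hip : i ∈ P j
        · exact Finset.mem_union_right _ (Finset.mem_inter.mpr ⟨hi.1, hip⟩)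
        · exact Finset.mem_union_left _ (by
            simp only [hS, Finset.mem_filter, Finset.mem_sdiff]
            exact ⟨⟨hi.1, hip⟩, hi.2⟩)
      have h1 : w + 1 ≤ (S j).card + (I j ∩ P j).card :=
        le_trans (hc j) (le_trans (Finset.card_le_card hsub) (Finset.card_union_le _ _))
      have := h1
      push_cast at this ⊢
      linarith
  calc (∑ j, max 0 ((w : ℤ) + 1 - ((k : ℤ) - (r j : ℤ))))
      ≤ ∑ j, ((S j).card : ℤ) := Finset.sum_le_sum (fun j _ => hterm j)
    _ ≤ (hammingNorm c : ℤ) := by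
        have hdisj : ∀ j ∈ (Finset.univ : Finset (Fin μ)), ∀ l ∈ Finset.univ, j ≠ l →
            Disjoint (S j) (S l) := by
          intro j _ l _ hjl
          rcases lt_or_gt_of_ne hjl with h | h
          · -- I j ⊆ P l, S l disjoint from P l
            apply Finset.disjoint_left.mpr
            intro i hij hil
            simp only [hS, Finset.mem_filter, Finset.mem_sdiff] at hij hil
            exact hil.1.2 (Finset.mem_biUnion.mpr ⟨j, by simp [h], hij.1.1⟩)
          · apply Finset.disjoint_left.mpr
            intro i hij hil
            simp only [hS, Finset.mem_filter, Finset.mem_sdiff] at hij hil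
            exact hij.1.2 (Finset.mem_biUnion.mpr ⟨l, by simp [h], hil.1.1⟩)
        have hsum : ∑ j, (S j).card = (Finset.univ.biUnion S).card :=
          (Finset.card_biUnion hdisj).symm
        have hsubset : Finset.univ.biUnion S ⊆ Finset.univ.filter (fun i => c i ≠ 0) := by
          intro i hi
          rcases Finset.mem_biUnion.mp hi with ⟨j, _, hij⟩
          simp only [hS, Finset.mem_filter, Finset.mem_sdiff] at hij
          simp [hij.2]
        have : ∑ j, (S j).card ≤ hammingNorm c := by
          rw [hsum, hammingNorm]
          exact Finset.card_le_card hsubset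
        exact_mod_cast this
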